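/- Lower bound on eigenvalues via the potential (Corollary to Lemma on potentials): Let φ : V → ℝ satisfy (λ − W(u)) q(u) φ(u) = Σ_{v~u} w(u,v)[φ(u) − φ(v)] with w ≥ 0 and q > 0, and let S = {u ∈ V : φ(u) ≥ 0} with both S and V∖S restricted so that the relevant sums are nonzero. Then λ ≥ max over S' ∈ {S, V∖S} with Σ_{u∈S'} q(u)φ(u)² > 0 of [Σ_{u∈S'} W(u) q(u) φ(u)²] / [Σ_{u∈S'} q(u) φ(u)²]. -/
import Mathlib


theorem statement10 {V : Type*} [Fintype V] [DecidableEq V]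
    (w : V → V → ℝ) (hw : ∀ u v, w u v = w v u) (hwpos : ∀ u v, 0 ≤ w u v)
    (q : V → ℝ) (hq : ∀ u, 0 < q u) (W : V → ℝ) (lam : ℝ) (φ : V → ℝ) (hφ : φ ≠ 0)
    (heig : ∀ u, (lam - W u) * q u * φ u = ∑ v, w u v * (φ u - φ v))
    (S : Finset V) (hS : S = Finset.univ.filter (fun u => 0 ≤ φ u)) :
    ∀ S' : Finset V, (S' = S ∨ S' = Sᶜ) → 0 < ∑ u ∈ S', q u * φ u ^2 →
      (∑ u ∈ S', W u * q u * φ u ^2) / (∑ u ∈ S', q u * φ u ^2) ≤ lam := by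
  intro S' hS' hD
  rw [div_le_iff₀ hD]
  -- sign property across the boundary of S'
  have hsign : ∀ u ∈ S', ∀ v ∉ S', φ u * φ v ≤ 0 := by
    intro u hu v hv
    rcases hS' with rfl | rfl
    · rw [hS, Finset.mem_filter] at hu hv
      push_neg at hv
      have hv' : φ v < 0 := hv (Finset.mem_univ v)
      exact mul_nonpos_of_nonneg_of_nonpos hu.2 hv'.le
    · rw [Finset.mem_compl] at hu
      rw [Finset.notMem_compl] at hv
      rw [hS, Finset.mem_filter] at hu hv
      push_neg at hu
      have hu' : φ u < 0 := hu (Finset.mem_univ u)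
      rw [mul_comm]
      exact mul_nonpos_of_nonneg_of_nonpos hv.2 hu'.le
  -- multiply the eigen-equation by φ u
  have h1 : ∀ u, (lam - W u) * q u * φ u ^ 2 = ∑ v, φ u * (w u v * (φ u - φ v)) := by
    intro u
    calc (lam - W u) * q u * φ u ^ 2 = ((lam - W u) * q u * φ u) * φ u := by ring
      _ = (∑ v, w u v * (φ u - φ v)) * φ u := by rw [heig u]
      _ = ∑ v, φ u * (w u v * (φ u - φ v)) := by
          rw [Finset.sum_mul]; exact Finset.sum_congr rfl fun v _ => by ring
  have hmain : lam * (∑ u ∈ S', q u * φ u ^ 2) - (∑ u ∈ S', W u * q u * φ u ^ 2)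
      = ∑ u ∈ S', ∑ v, φ u * (w u v * (φ u - φ v)) := by
    rw [Finset.mul_sum, ← Finset.sum_sub_distrib]
    exact Finset.sum_congr rfl fun u _ => by rw [← h1 u]; ring
  -- split the inner sum into S' and its complement
  have hsplit : ∀ u, (∑ v, φ u * (w u v * (φ u - φ v)))
      = (∑ v ∈ S', φ u * (w u v * (φ u - φ v)))
        + ∑ v ∈ S'ᶜ, φ u * (w u v * (φ u - φ v)) := by
    intro u
    rw [Finset.sum_add_sum_compl]
  have hA : (0:ℝ) ≤ ∑ u ∈ S', ∑ v ∈ S', φ u * (w u v * (φ u - φ v)) := by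
    have h2 : (∑ u ∈ S', ∑ v ∈ S', φ u * (w u v * (φ u - φ v)))
        + (∑ u ∈ S', ∑ v ∈ S', φ u * (w u v * (φ u - φ v)))
        = ∑ u ∈ S', ∑ v ∈ S', w u v * (φ u - φ v) ^ 2 := by
      nth_rewrite 1 [Finset.sum_comm (s := S') (t := S')]
      rw [← Finset.sum_add_distrib]
      refine Finset.sum_congr rfl fun u _ => ?_
      rw [← Finset.sum_add_distrib]
      refine Finset.sum_congr rfl fun v _ => ?_
      rw [hw v u]; ring
    have h3 : (0:ℝ) ≤ ∑ u ∈ S', ∑ v ∈ S', w u v * (φ u - φ v) ^ 2 :=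
      Finset.sum_nonneg fun u _ => Finset.sum_nonneg fun v _ =>
        mul_nonneg (hwpos u v) (sq_nonneg _)
    linarith
  have hB : (0:ℝ) ≤ ∑ u ∈ S', ∑ v ∈ S'ᶜ, φ u * (w u v * (φ u - φ v)) := by
    refine Finset.sum_nonneg fun u hu => Finset.sum_nonneg fun v hv => ?_
    have h4 := hsign u hu v (Finset.mem_compl.mp hv)
    nlinarith [hwpos u v, sq_nonneg (φ u)]
  have : (0:ℝ) ≤ ∑ u ∈ S', ∑ v, φ u * (w u v * (φ u - φ v)) := by
    simp_rw [hsplit]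
    rw [Finset.sum_add_distrib]
    exact add_nonneg hA hB
  linarith [hmain]
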